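/- For j = 1, 2, 3 let e_j ∈ ℝ³ with ‖e_j‖ ≤ 1 and the vectors e₁, e₂, e₃ pairwise orthogonal, and define qubit effects E_j = ½(1 + e_j · σ) on ℂ², where e · σ = e₁σ_x + e₂σ_y + e₃σ_z with the Pauli matrices σ_x, σ_y, σ_z. If ‖e₁‖² + ‖e₂‖² + ‖e₃‖² ≤ 1, then E₁, E₂, E₃ are coexistent. -/

import Mathlib

open Matrix ComplexOrder

/-- `e · σ = e₁σ_x + e₂σ_y + e₃σ_z` for `e ∈ ℝ³` and the Pauli matrices. -/
noncomputable def dotSigma (e : EuclideanSpace ℝ (Fin 3)) : Matrix (Fin 2) (Fin 2) ℂ :=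
  (e 0 : ℂ) • !![0, 1; 1, 0] + (e 1 : ℂ) • !![0, -Complex.I; Complex.I, 0] +
    (e 2 : ℂ) • !![1, 0; 0, -1]

/-- A qubit effect: a 2×2 matrix `A` with `0 ≤ A ≤ 1` in the Loewner order. -/
def MatIsEffect (A : Matrix (Fin 2) (Fin 2) ℂ) : Prop := A.PosSemidef ∧ (1 - A).PosSemidef

/- ### Auxiliary lemmas -/

lemma dotSigma_eq (e : EuclideanSpace ℝ (Fin 3)) :
    dotSigma e = !![(e 2 : ℂ), (e 0 : ℂ) - (e 1 : ℂ) * Complex.I;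
      (e 0 : ℂ) + (e 1 : ℂ) * Complex.I, -(e 2 : ℂ)] := by
  ext i j
  fin_cases i <;> fin_cases j <;> (simp [dotSigma]; try ring)

lemma key_ineq (t u s : ℝ) (h1 : u^2 ≤ t^2*s^2) (h2 : 0 ≤ t*s) : 0 ≤ t*s + u := by
  nlinarith [sq_nonneg (t*s + u), sq_nonneg (t*s - u)]

/-- For `‖w‖ ≤ t`, the matrix `t·1 + w·σ` is positive semidefinite. -/
lemma psd_aux (w : EuclideanSpace ℝ (Fin 3)) (t : ℝ) (h : ‖w‖ ≤ t) :
    ((t : ℂ) • 1 + dotSigma w).PosSemidef := by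
  have hW : ‖w‖ ^ 2 = w 0 ^ 2 + w 1 ^ 2 + w 2 ^ 2 := by
    rw [EuclideanSpace.real_norm_sq_eq, Fin.sum_univ_three]
  have hW0 : (0:ℝ) ≤ ‖w‖ := norm_nonneg w
  have hA : (t : ℂ) • 1 + dotSigma w =
      !![(t : ℂ) + (w 2 : ℂ), (w 0 : ℂ) - (w 1 : ℂ) * Complex.I;
        (w 0 : ℂ) + (w 1 : ℂ) * Complex.I, (t : ℂ) - (w 2 : ℂ)] := by
    rw [dotSigma_eq]
    ext i j
    fin_cases i <;> fin_cases j <;> (simp [Matrix.one_apply]; try ring)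
  rw [hA]
  rw [Matrix.posSemidef_iff_dotProduct_mulVec]
  constructor
  · rw [Matrix.IsHermitian]
    ext i j
    fin_cases i <;> fin_cases j <;> simp [Matrix.conjTranspose_apply, Complex.ext_iff]
  · intro x
    set a := x 0 with ha
    set b := x 1 with hb
    have hv : star x ⬝ᵥ (!![(t : ℂ) + (w 2 : ℂ), (w 0 : ℂ) - (w 1 : ℂ) * Complex.I;
        (w 0 : ℂ) + (w 1 : ℂ) * Complex.I, (t : ℂ) - (w 2 : ℂ)]) *ᵥ x =
        (starRingEnd ℂ a) * (((t : ℂ) + (w 2 : ℂ)) * a + ((w 0 : ℂ) - (w 1 : ℂ) * Complex.I) * b)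
        + (starRingEnd ℂ b) * (((w 0 : ℂ) + (w 1 : ℂ) * Complex.I) * a + ((t : ℂ) - (w 2 : ℂ)) * b) := by
      simp [dotProduct, Matrix.mulVec, Fin.sum_univ_two, mul_comm, ha, hb]
    rw [hv]
    rw [Complex.le_def]
    set a1 := a.re; set a2 := a.im; set b1 := b.re; set b2 := b.im
    set p := 2*(a1*b1+a2*b2) with hp
    set q := 2*(a1*b2-a2*b1) with hq
    set r := a1^2+a2^2-b1^2-b2^2 with hr
    set s := a1^2+a2^2+b1^2+b2^2 with hs
    have hs0 : (0:ℝ) ≤ s := by positivity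
    have cs : (w 0 * p + w 1 * q + w 2 * r)^2 ≤ (w 0^2 + w 1^2 + w 2^2) * (p^2 + q^2 + r^2) := by
      nlinarith [sq_nonneg (w 0 * q - w 1 * p), sq_nonneg (w 0 * r - w 2 * p),
        sq_nonneg (w 1 * r - w 2 * q)]
    have hkey : p^2 + q^2 + r^2 = s^2 := by rw [hp, hq, hr, hs]; ring
    have hW2 : w 0^2 + w 1^2 + w 2^2 ≤ t^2 := by nlinarith [hW, hW0, h]
    have h1 : (w 0 * p + w 1 * q + w 2 * r)^2 ≤ t^2 * s^2 := by
      rw [hkey] at cs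
      calc (w 0 * p + w 1 * q + w 2 * r)^2 ≤ (w 0^2 + w 1^2 + w 2^2) * s^2 := cs
        _ ≤ t^2 * s^2 := mul_le_mul_of_nonneg_right hW2 (sq_nonneg s)
    have hf : (0:ℝ) ≤ t*s + (w 0 * p + w 1 * q + w 2 * r) :=
      key_ineq _ _ _ h1 (mul_nonneg (le_trans hW0 h) hs0)
    constructor
    · simp only [Complex.add_re, Complex.mul_re, Complex.mul_im, Complex.add_im, Complex.sub_re,
        Complex.sub_im, Complex.conj_re, Complex.conj_im, Complex.ofReal_re, Complex.ofReal_im,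
        Complex.I_re, Complex.I_im, Complex.zero_re]
      rw [hp, hq, hr, hs] at hf
      linarith [hf]
    · simp only [Complex.add_im, Complex.mul_re, Complex.mul_im, Complex.add_re, Complex.sub_re,
        Complex.sub_im, Complex.conj_re, Complex.conj_im, Complex.ofReal_re, Complex.ofReal_im,
        Complex.I_re, Complex.I_im, Complex.zero_im]
      ring

/-- The sign `±1` attached to an outcome `i` in slot `k`. -/
noncomputable def sgn (i : Fin 3 → Bool) (k : Fin 3) : ℝ := if i k then 1 else -1

lemma sgn_mul_self (i : Fin 3 → Bool) (k : Fin 3) : sgn i k * sgn i k = 1 := by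
  unfold sgn; split <;> norm_num

lemma dotSigma_add (e f : EuclideanSpace ℝ (Fin 3)) :
    dotSigma (e + f) = dotSigma e + dotSigma f := by
  unfold dotSigma
  have h0 : (e + f) 0 = e 0 + f 0 := rfl
  have h1 : (e + f) 1 = e 1 + f 1 := rfl
  have h2 : (e + f) 2 = e 2 + f 2 := rfl
  rw [h0, h1, h2]
  push_cast
  rw [add_smul, add_smul, add_smul]
  abel

lemma dotSigma_smul (c : ℝ) (e : EuclideanSpace ℝ (Fin 3)) :
    dotSigma (c • e) = (c : ℂ) • dotSigma e := by
  unfold dotSigma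
  have h0 : (c • e) 0 = c * e 0 := rfl
  have h1 : (c • e) 1 = c * e 1 := rfl
  have h2 : (c • e) 2 = c * e 2 := rfl
  rw [h0, h1, h2]
  push_cast
  rw [smul_add, smul_add, smul_smul, smul_smul, smul_smul]

lemma dotSigma_neg (e : EuclideanSpace ℝ (Fin 3)) : dotSigma (-e) = -dotSigma e := by
  have h : -e = (-1 : ℝ) • e := by module
  rw [h, dotSigma_smul]; push_cast; rw [neg_smul, one_smul]

lemma dotSigma_sum (v : Fin 3 → EuclideanSpace ℝ (Fin 3)) (c : Fin 3 → ℝ) :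
    dotSigma (∑ k, c k • v k) = ∑ k, ((c k : ℂ)) • dotSigma (v k) := by
  rw [Fin.sum_univ_three, Fin.sum_univ_three, dotSigma_add, dotSigma_add,
    dotSigma_smul, dotSigma_smul, dotSigma_smul]

lemma sum_sgnZ : ∀ k : Fin 3,
    ∑ i : Fin 3 → Bool, (if i k then (1:ℤ) else -1) = 0 := by decide

lemma filter_sum_sgnZ : ∀ k l : Fin 3,
    ∑ i ∈ Finset.univ.filter (fun i : Fin 3 → Bool => i k = true),
      (if i l then (1:ℤ) else -1) = if l = k then 4 else 0 := by decide

lemma card_filter_sgn : ∀ k : Fin 3,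
    (Finset.univ.filter (fun i : Fin 3 → Bool => i k = true)).card = 4 := by decide

lemma sgn_castC (i : Fin 3 → Bool) (k : Fin 3) :
    ((sgn i k : ℝ) : ℂ) = ((if i k then (1:ℤ) else -1 : ℤ) : ℂ) := by
  unfold sgn; split <;> norm_num

lemma smul_psd {M : Matrix (Fin 2) (Fin 2) ℂ} (hM : M.PosSemidef) {r : ℂ} (hr : 0 ≤ r) :
    (r • M).PosSemidef := by
  have him : r.im = 0 := by
    have := (Complex.le_def.mp hr).2
    simpa using this.symm
  rw [Matrix.posSemidef_iff_dotProduct_mulVec]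
  constructor
  · rw [Matrix.IsHermitian, conjTranspose_smul, hM.1.eq, Complex.star_def,
      Complex.conj_eq_iff_im.mpr him]
  · intro x
    rw [smul_mulVec, dotProduct_smul, smul_eq_mul]
    exact mul_nonneg hr (hM.dotProduct_mulVec_nonneg x)

lemma zero_le_ofReal {r : ℝ} (hr : 0 ≤ r) : (0:ℂ) ≤ (r:ℂ) := by
  rw [Complex.zero_le_real]; exact hr

/-- For pairwise orthogonal vectors e₁, e₂, e₃ of norm at most one with
‖e₁‖² + ‖e₂‖² + ‖e₃‖² ≤ 1, the qubit effects E_j = ½(1 + e_j · σ) are coexistent. -/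
theorem coexistent_of_orthogonal_triple (v : Fin 3 → EuclideanSpace ℝ (Fin 3))
    (hnorm : ∀ j, ‖v j‖ ≤ 1)
    (horth : ∀ j l, j ≠ l → inner ℝ (v j) (v l) = (0 : ℝ))
    (hsum : ‖v 0‖ ^ 2 + ‖v 1‖ ^ 2 + ‖v 2‖ ^ 2 ≤ 1) :
    ∃ G : (Fin 3 → Bool) → Matrix (Fin 2) (Fin 2) ℂ,
      (∀ i, MatIsEffect (G i)) ∧ (∑ i, G i = 1) ∧
      ∀ k : Fin 3,
        ∑ i ∈ Finset.univ.filter (fun i : Fin 3 → Bool => i k = true), G i =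
          (2 : ℂ)⁻¹ • (1 + dotSigma (v k)) := by
  have h8 : (0:ℂ) ≤ (8:ℂ)⁻¹ := by
    have h : ((8⁻¹ : ℝ) : ℂ) = (8:ℂ)⁻¹ := by push_cast; ring
    rw [← h]; exact zero_le_ofReal (by norm_num)
  refine ⟨fun i => (8 : ℂ)⁻¹ • ((1 : Matrix (Fin 2) (Fin 2) ℂ) +
      dotSigma (∑ k, sgn i k • v k)), ?_, ?_, ?_⟩
  · -- each G i is an effect
    intro i
    set w : EuclideanSpace ℝ (Fin 3) := ∑ k, sgn i k • v k with hw
    have hw2 : ‖w‖ ^ 2 = ‖v 0‖ ^ 2 + ‖v 1‖ ^ 2 + ‖v 2‖ ^ 2 := by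
      rw [← real_inner_self_eq_norm_sq, hw]
      simp only [Fin.sum_univ_three, inner_add_left, inner_add_right,
        real_inner_smul_left, real_inner_smul_right]
      rw [horth 0 1 (by decide), horth 0 2 (by decide), horth 1 0 (by decide),
        horth 1 2 (by decide), horth 2 0 (by decide), horth 2 1 (by decide),
        real_inner_self_eq_norm_sq, real_inner_self_eq_norm_sq, real_inner_self_eq_norm_sq]
      linear_combination (‖v 0‖^2) * sgn_mul_self i 0 + (‖v 1‖^2) * sgn_mul_self i 1
        + (‖v 2‖^2) * sgn_mul_self i 2
    have hw1 : ‖w‖ ≤ 1 := by nlinarith [norm_nonneg w]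
    constructor
    · have h1 := smul_psd (psd_aux w 1 hw1) h8
      have heq : ((1:ℝ) : ℂ) • (1 : Matrix (Fin 2) (Fin 2) ℂ) + dotSigma w
          = 1 + dotSigma w := by norm_num
      rwa [heq] at h1
    · have heq : (1 : Matrix (Fin 2) (Fin 2) ℂ) - (8 : ℂ)⁻¹ • (1 + dotSigma w)
          = (8 : ℂ)⁻¹ • (((7:ℝ) : ℂ) • (1 : Matrix (Fin 2) (Fin 2) ℂ) + dotSigma (-w)) := by
        rw [dotSigma_neg]
        have h7 : ((7:ℝ) : ℂ) = (7:ℂ) := by norm_num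
        rw [h7]
        module
      rw [heq]
      exact smul_psd (psd_aux (-w) 7 (by rw [norm_neg]; linarith)) h8
  · -- the G i sum to one
    rw [← Finset.smul_sum, Finset.sum_add_distrib, Finset.sum_const]
    have h0 : ∑ i : Fin 3 → Bool, dotSigma (∑ k, sgn i k • v k) = 0 := by
      simp only [dotSigma_sum]
      rw [Finset.sum_comm]
      refine Finset.sum_eq_zero fun k _ => ?_
      rw [← Finset.sum_smul]
      have h : ∑ i : Fin 3 → Bool, ((sgn i k : ℝ) : ℂ) = 0 := by
        simp only [sgn_castC]
        rw [← Int.cast_sum, sum_sgnZ k]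
        norm_num
      rw [h, zero_smul]
    rw [h0, add_zero]
    have hcard : (Finset.univ : Finset (Fin 3 → Bool)).card = 8 := by decide
    rw [hcard, ← Nat.cast_smul_eq_nsmul ℂ, smul_smul]
    norm_num
  · -- marginals
    intro k
    rw [← Finset.smul_sum, Finset.sum_add_distrib, Finset.sum_const, card_filter_sgn k]
    have h0 : ∑ i ∈ Finset.univ.filter (fun i : Fin 3 → Bool => i k = true),
        dotSigma (∑ l, sgn i l • v l) = (4 : ℂ) • dotSigma (v k) := by
      simp only [dotSigma_sum]
      rw [Finset.sum_comm]
      have hl : ∀ l : Fin 3, ∑ i ∈ Finset.univ.filter (fun i : Fin 3 → Bool => i k = true),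
          ((sgn i l : ℝ) : ℂ) • dotSigma (v l)
          = (if l = k then (4:ℂ) else 0) • dotSigma (v l) := by
        intro l
        rw [← Finset.sum_smul]
        have h : ∑ i ∈ Finset.univ.filter (fun i : Fin 3 → Bool => i k = true),
            ((sgn i l : ℝ) : ℂ) = (if l = k then (4:ℂ) else 0) := by
          simp only [sgn_castC]
          rw [← Int.cast_sum, filter_sum_sgnZ k l]
          split <;> norm_num
        rw [h]
      rw [Finset.sum_congr rfl fun l _ => hl l]
      simp only [ite_smul, zero_smul]
      rw [Finset.sum_ite_eq' Finset.univ k (fun l => (4:ℂ) • dotSigma (v l))]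
      simp
    rw [h0, ← Nat.cast_smul_eq_nsmul ℂ, smul_add, smul_smul, smul_smul]
    push_cast
    module
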